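/- Let b(ξ) = √(1+|ξ|² − ε²|ξ|⁴) with ε ∈ (0,1]. For ξ, η, σ ∈ ℝ² in the low-frequency region (ε|·|² ≤ 3κ₀, κ₀ ≤ 1/200), each of the phase functions φ̃(ξ,η,σ) = b(ξ) + b(ξ−η) + b(η−σ) + b(σ), b(ξ)+b(ξ−η)+b(η−σ)−b(σ), b(ξ)+b(ξ−η)−b(η−σ)+b(σ), b(ξ)−b(ξ−η)+b(η−σ)+b(σ) is bounded below: |φ̃(ξ,η,σ)| ≥ c·min{⟨ξ⟩, ⟨ξ−η⟩, ⟨η−σ⟩, ⟨σ⟩}^{−1} for a constant c > 0 depending only on κ₀ (equivalently, 1/|φ̃| ≲ min{⟨ξ⟩,⟨ξ−η⟩,⟨η−σ⟩,⟨σ⟩}). -/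

import Mathlib

open Real

set_option maxHeartbeats 1000000

lemma sqrt_shift_le (x y : ℝ) (hx : 0 ≤ x) (hy : 0 ≤ y) :
    Real.sqrt (1 + (x + y) ^ 2) ≤ Real.sqrt (1 + x ^ 2) + y := by
  have h1 : Real.sqrt (1 + x ^ 2) ^ 2 = 1 + x ^ 2 := Real.sq_sqrt (by positivity)
  have h2 : 0 ≤ Real.sqrt (1 + x ^ 2) := Real.sqrt_nonneg _
  have hx' : x ≤ Real.sqrt (1 + x ^ 2) := by nlinarith
  have h3 : (1 + (x + y) ^ 2) ≤ (Real.sqrt (1 + x ^ 2) + y) ^ 2 := by nlinarith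
  calc Real.sqrt (1 + (x + y) ^ 2)
      ≤ Real.sqrt ((Real.sqrt (1 + x ^ 2) + y) ^ 2) := Real.sqrt_le_sqrt h3
    _ = _ := Real.sqrt_sq (by positivity)

lemma bfacts (κ₀ ε x : ℝ) (hκ : 0 ≤ κ₀) (hκ' : κ₀ ≤ 1 / 200)
    (hd : ε ^ 2 * x ^ 4 ≤ 9 * κ₀ ^ 2) (hx : 0 ≤ x) :
    1 / 2 ≤ Real.sqrt (1 + x ^ 2 - ε ^ 2 * x ^ 4) ∧
    Real.sqrt (1 + x ^ 2 - ε ^ 2 * x ^ 4) ≤ Real.sqrt (1 + x ^ 2) ∧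
    Real.sqrt (1 + x ^ 2) * (Real.sqrt (1 + x ^ 2) - Real.sqrt (1 + x ^ 2 - ε ^ 2 * x ^ 4))
      ≤ 9 * κ₀ ^ 2 ∧
    1 ≤ Real.sqrt (1 + x ^ 2) ∧ x ≤ Real.sqrt (1 + x ^ 2) ∧
    1 / 2 ≤ Real.sqrt (1 + x ^ 2) * (Real.sqrt (1 + x ^ 2) - x) := by
  have hκ2 : 9 * κ₀ ^ 2 ≤ 9 / 40000 := by nlinarith
  have hε4 : 0 ≤ ε ^ 2 * x ^ 4 := by positivity
  have harg : 0 ≤ 1 + x ^ 2 - ε ^ 2 * x ^ 4 := by nlinarith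
  set J := Real.sqrt (1 + x ^ 2) with hJ
  set B := Real.sqrt (1 + x ^ 2 - ε ^ 2 * x ^ 4) with hB
  have hJ2 : J ^ 2 = 1 + x ^ 2 := Real.sq_sqrt (by positivity)
  have hB2 : B ^ 2 = 1 + x ^ 2 - ε ^ 2 * x ^ 4 := Real.sq_sqrt harg
  have hJ0 : 0 ≤ J := Real.sqrt_nonneg _
  have hB0 : 0 ≤ B := Real.sqrt_nonneg _
  have hBhalf : 1 / 2 ≤ B := by nlinarith
  have hBJ : B ≤ J := by nlinarith
  have hprod : 0 ≤ B * (J - B) := mul_nonneg hB0 (by linarith)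
  refine ⟨hBhalf, hBJ, by nlinarith, by nlinarith, by nlinarith, by nlinarith [sq_nonneg (J - x)]⟩

lemma key_lemma (κ₀ ε : ℝ) (hκ : 0 ≤ κ₀) (hκ' : κ₀ ≤ 1 / 200)
    (p q r s : ℝ) (hp : 0 ≤ p) (hq : 0 ≤ q) (hr : 0 ≤ r) (hs : 0 ≤ s)
    (hdp : ε ^ 2 * p ^ 4 ≤ 9 * κ₀ ^ 2) (hdq : ε ^ 2 * q ^ 4 ≤ 9 * κ₀ ^ 2)
    (hdr : ε ^ 2 * r ^ 4 ≤ 9 * κ₀ ^ 2) (hds : ε ^ 2 * s ^ 4 ≤ 9 * κ₀ ^ 2)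
    (htri : s ≤ p + q + r) :
    1 / 4 * (min (Real.sqrt (1 + p ^ 2)) (min (Real.sqrt (1 + q ^ 2))
        (min (Real.sqrt (1 + r ^ 2)) (Real.sqrt (1 + s ^ 2)))))⁻¹
      ≤ Real.sqrt (1 + p ^ 2 - ε ^ 2 * p ^ 4) + Real.sqrt (1 + q ^ 2 - ε ^ 2 * q ^ 4)
        + Real.sqrt (1 + r ^ 2 - ε ^ 2 * r ^ 4) - Real.sqrt (1 + s ^ 2 - ε ^ 2 * s ^ 4) := by
  have hκ2 : 9 * κ₀ ^ 2 ≤ 9 / 40000 := by nlinarith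
  obtain ⟨hBp, hBpJ, hDp, hJp1, hJpp, hJpg⟩ := bfacts κ₀ ε p hκ hκ' hdp hp
  obtain ⟨hBq, hBqJ, hDq, hJq1, hJqq, hJqg⟩ := bfacts κ₀ ε q hκ hκ' hdq hq
  obtain ⟨hBr, hBrJ, hDr, hJr1, hJrr, hJrg⟩ := bfacts κ₀ ε r hκ hκ' hdr hr
  obtain ⟨hBs, hBsJ, hDs, hJs1, hJss, hJsg⟩ := bfacts κ₀ ε s hκ hκ' hds hs
  set Jp := Real.sqrt (1 + p ^ 2)
  set Jq := Real.sqrt (1 + q ^ 2)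
  set Jr := Real.sqrt (1 + r ^ 2)
  set Js := Real.sqrt (1 + s ^ 2)
  set Bp := Real.sqrt (1 + p ^ 2 - ε ^ 2 * p ^ 4)
  set Bq := Real.sqrt (1 + q ^ 2 - ε ^ 2 * q ^ 4)
  set Br := Real.sqrt (1 + r ^ 2 - ε ^ 2 * r ^ 4)
  set Bs := Real.sqrt (1 + s ^ 2 - ε ^ 2 * s ^ 4)
  have hmono : ∀ x y : ℝ, 0 ≤ x → 0 ≤ y → s ≤ x + y →
      Js ≤ Real.sqrt (1 + x ^ 2) + y := by
    intro x y hx hy hsxy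
    have h2 : s ^ 2 ≤ (x + y) ^ 2 := pow_le_pow_left₀ hs hsxy 2
    calc Js ≤ Real.sqrt (1 + (x + y) ^ 2) := Real.sqrt_le_sqrt (by linarith)
      _ ≤ _ := sqrt_shift_le x y hx hy
  have hA1 : Js ≤ Jp + (q + r) := hmono p (q + r) hp (by linarith) (by linarith)
  have hA2 : Js ≤ Jq + (p + r) := hmono q (p + r) hq (by linarith) (by linarith)
  have hm1 : (1:ℝ) ≤ min Jp (min Jq (min Jr Js)) :=
    le_min hJp1 (le_min hJq1 (le_min hJr1 hJs1))
  have hminv : (min Jp (min Jq (min Jr Js)))⁻¹ ≤ 1 := inv_le_one_of_one_le₀ hm1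
  have hmin4 : (0:ℝ) ≤ (min Jp (min Jq (min Jr Js)))⁻¹ := by positivity
  have hquarter : 1 / 4 * (min Jp (min Jq (min Jr Js)))⁻¹ ≤ 1 / 4 := by linarith
  rcases le_or_gt Js Jp with hcase | hsp
  · have hpb : Jp - Bp ≤ 9 * κ₀ ^ 2 := by
      nlinarith [mul_nonneg (sub_nonneg.2 hJp1) (sub_nonneg.2 hBpJ)]
    linarith
  rcases le_or_gt Js Jq with hcase | hsq
  · have hqb : Jq - Bq ≤ 9 * κ₀ ^ 2 := by
      nlinarith [mul_nonneg (sub_nonneg.2 hJq1) (sub_nonneg.2 hBqJ)]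
    linarith
  rcases le_or_gt Js Jr with hcase | hsr
  · have hrb : Jr - Br ≤ 9 * κ₀ ^ 2 := by
      nlinarith [mul_nonneg (sub_nonneg.2 hJr1) (sub_nonneg.2 hBrJ)]
    linarith
  clear hm1 hminv hmin4 hquarter
  rw [min_eq_left hsr.le]
  rcases le_total Jp Jq with h1 | h1
  · rcases le_total Jp Jr with h2 | h2
    · -- Jp minimal, anchor q
      rw [min_eq_left (le_min h1 h2)]
      have hJp0 : (0:ℝ) < Jp := by linarith
      rw [show (1:ℝ) / 4 * Jp⁻¹ = (1 / 4) / Jp by ring, div_le_iff₀ hJp0]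
      have a1 : Jp * (Jq - Bq) ≤ 9 * κ₀ ^ 2 :=
        (mul_le_mul_of_nonneg_right h1 (by linarith)).trans hDq
      have a2 : Jp * (Jr - Br) ≤ 9 * κ₀ ^ 2 :=
        (mul_le_mul_of_nonneg_right h2 (by linarith)).trans hDr
      have g : Bs * Jp ≤ (Jq + (p + r)) * Jp :=
        mul_le_mul_of_nonneg_right (hBsJ.trans hA2) (by linarith)
      have f2 : 0 ≤ Jp * (Jr - r) := mul_nonneg (by linarith) (by linarith)
      linarith [hJpg, hDp, a1, a2, g, f2, hκ2]
    · -- Jr minimal (≤ Jp ≤ Jq), anchor p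
      rw [min_eq_right (h2.trans h1), min_eq_right h2]
      have hJr0 : (0:ℝ) < Jr := by linarith
      rw [show (1:ℝ) / 4 * Jr⁻¹ = (1 / 4) / Jr by ring, div_le_iff₀ hJr0]
      have a1 : Jr * (Jp - Bp) ≤ 9 * κ₀ ^ 2 :=
        (mul_le_mul_of_nonneg_right h2 (by linarith)).trans hDp
      have a2 : Jr * (Jq - Bq) ≤ 9 * κ₀ ^ 2 :=
        (mul_le_mul_of_nonneg_right ((h2.trans h1)) (by linarith)).trans hDq
      have g : Bs * Jr ≤ (Jp + (q + r)) * Jr :=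
        mul_le_mul_of_nonneg_right (hBsJ.trans hA1) (by linarith)
      have f2 : 0 ≤ Jr * (Jq - q) := mul_nonneg (by linarith) (by linarith)
      linarith [hJrg, hDr, a1, a2, g, f2, hκ2]
  · rcases le_total Jq Jr with h3 | h3
    · -- Jq minimal, anchor p
      rw [min_eq_left h3, min_eq_right h1]
      have hJq0 : (0:ℝ) < Jq := by linarith
      rw [show (1:ℝ) / 4 * Jq⁻¹ = (1 / 4) / Jq by ring, div_le_iff₀ hJq0]
      have a1 : Jq * (Jp - Bp) ≤ 9 * κ₀ ^ 2 :=
        (mul_le_mul_of_nonneg_right h1 (by linarith)).trans hDp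
      have a2 : Jq * (Jr - Br) ≤ 9 * κ₀ ^ 2 :=
        (mul_le_mul_of_nonneg_right h3 (by linarith)).trans hDr
      have g : Bs * Jq ≤ (Jp + (q + r)) * Jq :=
        mul_le_mul_of_nonneg_right (hBsJ.trans hA1) (by linarith)
      have f2 : 0 ≤ Jq * (Jr - r) := mul_nonneg (by linarith) (by linarith)
      linarith [hJqg, hDq, a1, a2, g, f2, hκ2]
    · -- Jr minimal (≤ Jq ≤ Jp), anchor p
      rw [min_eq_right h3, min_eq_right (h3.trans h1)]
      have hJr0 : (0:ℝ) < Jr := by linarith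
      rw [show (1:ℝ) / 4 * Jr⁻¹ = (1 / 4) / Jr by ring, div_le_iff₀ hJr0]
      have a1 : Jr * (Jp - Bp) ≤ 9 * κ₀ ^ 2 :=
        (mul_le_mul_of_nonneg_right (h3.trans h1) (by linarith)).trans hDp
      have a2 : Jr * (Jq - Bq) ≤ 9 * κ₀ ^ 2 :=
        (mul_le_mul_of_nonneg_right h3 (by linarith)).trans hDq
      have g : Bs * Jr ≤ (Jp + (q + r)) * Jr :=
        mul_le_mul_of_nonneg_right (hBsJ.trans hA1) (by linarith)
      have f2 : 0 ≤ Jr * (Jq - q) := mul_nonneg (by linarith) (by linarith)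
      linarith [hJrg, hDr, a1, a2, g, f2, hκ2]

/-- With `b(ξ)=√(1+|ξ|²−ε²|ξ|⁴)`, `ε ∈ (0,1]`, on the
low-frequency region `ε|·|² ≤ 3κ₀` (`κ₀ ≤ 1/200`), each of the phases
`b(ξ) ± b(ξ−η) ± b(η−σ) ± b(σ)` with at most one minus sign (including the
all-plus phase) satisfies
`|φ̃| ≥ c · (min{⟨ξ⟩,⟨ξ−η⟩,⟨η−σ⟩,⟨σ⟩})⁻¹` with `c = c(κ₀) > 0`. -/
theorem cubic_phase_lower_bound
    (κ₀ : ℝ) (hκ : 0 < κ₀) (hκ' : κ₀ ≤ 1 / 200) :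
    ∃ c : ℝ, 0 < c ∧
      ∀ (ε : ℝ), 0 < ε → ε ≤ 1 →
      ∀ (ξ η σ : EuclideanSpace ℝ (Fin 2)),
        ε * ‖ξ‖ ^ 2 ≤ 3 * κ₀ → ε * ‖ξ - η‖ ^ 2 ≤ 3 * κ₀ →
        ε * ‖η - σ‖ ^ 2 ≤ 3 * κ₀ → ε * ‖σ‖ ^ 2 ≤ 3 * κ₀ →
      ∀ (s₁ s₂ s₃ : ℝ),
        ((s₁, s₂, s₃) = (1, 1, 1) ∨ (s₁, s₂, s₃) = (1, 1, -1) ∨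
         (s₁, s₂, s₃) = (1, -1, 1) ∨ (s₁, s₂, s₃) = (-1, 1, 1)) →
        c * (min (Real.sqrt (1 + ‖ξ‖ ^ 2))
              (min (Real.sqrt (1 + ‖ξ - η‖ ^ 2))
                (min (Real.sqrt (1 + ‖η - σ‖ ^ 2)) (Real.sqrt (1 + ‖σ‖ ^ 2)))))⁻¹
        ≤ |Real.sqrt (1 + ‖ξ‖ ^ 2 - ε ^ 2 * ‖ξ‖ ^ 4)
            + s₁ * Real.sqrt (1 + ‖ξ - η‖ ^ 2 - ε ^ 2 * ‖ξ - η‖ ^ 4)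
            + s₂ * Real.sqrt (1 + ‖η - σ‖ ^ 2 - ε ^ 2 * ‖η - σ‖ ^ 4)
            + s₃ * Real.sqrt (1 + ‖σ‖ ^ 2 - ε ^ 2 * ‖σ‖ ^ 4)| := by
  refine ⟨1 / 4, by norm_num, ?_⟩
  intro ε hε hε1 ξ η σ h1 h2 h3 h4 s₁ s₂ s₃ hcase
  have hd : ∀ x : EuclideanSpace ℝ (Fin 2), ε * ‖x‖ ^ 2 ≤ 3 * κ₀ →
      ε ^ 2 * ‖x‖ ^ 4 ≤ 9 * κ₀ ^ 2 := by
    intro x hx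
    have h0 : 0 ≤ ε * ‖x‖ ^ 2 := by positivity
    nlinarith [mul_le_mul hx hx h0 (by linarith : (0:ℝ) ≤ 3 * κ₀)]
  have hd1 := hd ξ h1
  have hd2 := hd (ξ - η) h2
  have hd3 := hd (η - σ) h3
  have hd4 := hd σ h4
  have n1 : (0:ℝ) ≤ ‖ξ‖ := norm_nonneg _
  have n2 : (0:ℝ) ≤ ‖ξ - η‖ := norm_nonneg _
  have n3 : (0:ℝ) ≤ ‖η - σ‖ := norm_nonneg _
  have n4 : (0:ℝ) ≤ ‖σ‖ := norm_nonneg _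
  -- triangle inequalities
  have t4 : ‖σ‖ ≤ ‖ξ‖ + ‖ξ - η‖ + ‖η - σ‖ := by
    have e : σ = ξ - (ξ - η) - (η - σ) := by abel
    calc ‖σ‖ = ‖ξ - (ξ - η) - (η - σ)‖ := by rw [← e]
      _ ≤ ‖ξ - (ξ - η)‖ + ‖η - σ‖ := norm_sub_le _ _
      _ ≤ (‖ξ‖ + ‖ξ - η‖) + ‖η - σ‖ := add_le_add_left (norm_sub_le _ _) _
  have t3 : ‖η - σ‖ ≤ ‖ξ‖ + ‖ξ - η‖ + ‖σ‖ := by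
    have e : η - σ = ξ - (ξ - η) - σ := by abel
    calc ‖η - σ‖ = ‖ξ - (ξ - η) - σ‖ := by rw [← e]
      _ ≤ ‖ξ - (ξ - η)‖ + ‖σ‖ := norm_sub_le _ _
      _ ≤ (‖ξ‖ + ‖ξ - η‖) + ‖σ‖ := add_le_add_left (norm_sub_le _ _) _
  have t2 : ‖ξ - η‖ ≤ ‖ξ‖ + ‖η - σ‖ + ‖σ‖ := by
    have e : ξ - η = ξ - (η - σ) - σ := by abel
    calc ‖ξ - η‖ = ‖ξ - (η - σ) - σ‖ := by rw [← e]
      _ ≤ ‖ξ - (η - σ)‖ + ‖σ‖ := norm_sub_le _ _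
      _ ≤ (‖ξ‖ + ‖η - σ‖) + ‖σ‖ := add_le_add_left (norm_sub_le _ _) _
  rcases hcase with h | h | h | h <;>
    rw [Prod.mk.injEq, Prod.mk.injEq] at h <;>
    obtain ⟨e1, e2, e3⟩ := h <;> subst e1 <;> subst e2 <;> subst e3
  · -- all plus : sum ≥ 2
    obtain ⟨b1, -, -, j1, -, -⟩ := bfacts κ₀ ε ‖ξ‖ hκ.le hκ' hd1 n1
    obtain ⟨b2, -, -, j2, -, -⟩ := bfacts κ₀ ε ‖ξ - η‖ hκ.le hκ' hd2 n2
    obtain ⟨b3, -, -, j3, -, -⟩ := bfacts κ₀ ε ‖η - σ‖ hκ.le hκ' hd3 n3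
    obtain ⟨b4, -, -, j4, -, -⟩ := bfacts κ₀ ε ‖σ‖ hκ.le hκ' hd4 n4
    have hm1 : (1:ℝ) ≤ min (Real.sqrt (1 + ‖ξ‖ ^ 2)) (min (Real.sqrt (1 + ‖ξ - η‖ ^ 2))
        (min (Real.sqrt (1 + ‖η - σ‖ ^ 2)) (Real.sqrt (1 + ‖σ‖ ^ 2)))) :=
      le_min j1 (le_min j2 (le_min j3 j4))
    have hminv : (min (Real.sqrt (1 + ‖ξ‖ ^ 2)) (min (Real.sqrt (1 + ‖ξ - η‖ ^ 2))
        (min (Real.sqrt (1 + ‖η - σ‖ ^ 2)) (Real.sqrt (1 + ‖σ‖ ^ 2)))))⁻¹ ≤ 1 :=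
      inv_le_one_of_one_le₀ hm1
    have habs := le_abs_self (Real.sqrt (1 + ‖ξ‖ ^ 2 - ε ^ 2 * ‖ξ‖ ^ 4)
        + 1 * Real.sqrt (1 + ‖ξ - η‖ ^ 2 - ε ^ 2 * ‖ξ - η‖ ^ 4)
        + 1 * Real.sqrt (1 + ‖η - σ‖ ^ 2 - ε ^ 2 * ‖η - σ‖ ^ 4)
        + 1 * Real.sqrt (1 + ‖σ‖ ^ 2 - ε ^ 2 * ‖σ‖ ^ 4))
    have hmpos : (0:ℝ) ≤ (min (Real.sqrt (1 + ‖ξ‖ ^ 2)) (min (Real.sqrt (1 + ‖ξ - η‖ ^ 2))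
        (min (Real.sqrt (1 + ‖η - σ‖ ^ 2)) (Real.sqrt (1 + ‖σ‖ ^ 2)))))⁻¹ := by positivity
    linarith
  · -- minus on σ
    have hk := key_lemma κ₀ ε hκ.le hκ' ‖ξ‖ ‖ξ - η‖ ‖η - σ‖ ‖σ‖ n1 n2 n3 n4 hd1 hd2 hd3 hd4 t4
    calc (1:ℝ) / 4 * (min (Real.sqrt (1 + ‖ξ‖ ^ 2)) (min (Real.sqrt (1 + ‖ξ - η‖ ^ 2))
          (min (Real.sqrt (1 + ‖η - σ‖ ^ 2)) (Real.sqrt (1 + ‖σ‖ ^ 2)))))⁻¹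
        ≤ Real.sqrt (1 + ‖ξ‖ ^ 2 - ε ^ 2 * ‖ξ‖ ^ 4)
            + Real.sqrt (1 + ‖ξ - η‖ ^ 2 - ε ^ 2 * ‖ξ - η‖ ^ 4)
            + Real.sqrt (1 + ‖η - σ‖ ^ 2 - ε ^ 2 * ‖η - σ‖ ^ 4)
            - Real.sqrt (1 + ‖σ‖ ^ 2 - ε ^ 2 * ‖σ‖ ^ 4) := hk
      _ = Real.sqrt (1 + ‖ξ‖ ^ 2 - ε ^ 2 * ‖ξ‖ ^ 4)
            + 1 * Real.sqrt (1 + ‖ξ - η‖ ^ 2 - ε ^ 2 * ‖ξ - η‖ ^ 4)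
            + 1 * Real.sqrt (1 + ‖η - σ‖ ^ 2 - ε ^ 2 * ‖η - σ‖ ^ 4)
            + (-1) * Real.sqrt (1 + ‖σ‖ ^ 2 - ε ^ 2 * ‖σ‖ ^ 4) := by ring
      _ ≤ _ := le_abs_self _
  · -- minus on η - σ
    have hk := key_lemma κ₀ ε hκ.le hκ' ‖ξ‖ ‖ξ - η‖ ‖σ‖ ‖η - σ‖ n1 n2 n4 n3 hd1 hd2 hd4 hd3 t3
    rw [min_comm (Real.sqrt (1 + ‖η - σ‖ ^ 2)) (Real.sqrt (1 + ‖σ‖ ^ 2))]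
    calc (1:ℝ) / 4 * (min (Real.sqrt (1 + ‖ξ‖ ^ 2)) (min (Real.sqrt (1 + ‖ξ - η‖ ^ 2))
          (min (Real.sqrt (1 + ‖σ‖ ^ 2)) (Real.sqrt (1 + ‖η - σ‖ ^ 2)))))⁻¹
        ≤ Real.sqrt (1 + ‖ξ‖ ^ 2 - ε ^ 2 * ‖ξ‖ ^ 4)
            + Real.sqrt (1 + ‖ξ - η‖ ^ 2 - ε ^ 2 * ‖ξ - η‖ ^ 4)
            + Real.sqrt (1 + ‖σ‖ ^ 2 - ε ^ 2 * ‖σ‖ ^ 4)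
            - Real.sqrt (1 + ‖η - σ‖ ^ 2 - ε ^ 2 * ‖η - σ‖ ^ 4) := hk
      _ = Real.sqrt (1 + ‖ξ‖ ^ 2 - ε ^ 2 * ‖ξ‖ ^ 4)
            + 1 * Real.sqrt (1 + ‖ξ - η‖ ^ 2 - ε ^ 2 * ‖ξ - η‖ ^ 4)
            + (-1) * Real.sqrt (1 + ‖η - σ‖ ^ 2 - ε ^ 2 * ‖η - σ‖ ^ 4)
            + 1 * Real.sqrt (1 + ‖σ‖ ^ 2 - ε ^ 2 * ‖σ‖ ^ 4) := by ring
      _ ≤ _ := le_abs_self _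
  · -- minus on ξ - η
    have hk := key_lemma κ₀ ε hκ.le hκ' ‖ξ‖ ‖η - σ‖ ‖σ‖ ‖ξ - η‖ n1 n3 n4 n2 hd1 hd3 hd4 hd2 t2
    rw [show min (Real.sqrt (1 + ‖ξ - η‖ ^ 2)) (min (Real.sqrt (1 + ‖η - σ‖ ^ 2))
          (Real.sqrt (1 + ‖σ‖ ^ 2)))
        = min (Real.sqrt (1 + ‖η - σ‖ ^ 2)) (min (Real.sqrt (1 + ‖σ‖ ^ 2))
          (Real.sqrt (1 + ‖ξ - η‖ ^ 2))) by
      rw [min_comm (Real.sqrt (1 + ‖ξ - η‖ ^ 2)), min_assoc]]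
    calc (1:ℝ) / 4 * (min (Real.sqrt (1 + ‖ξ‖ ^ 2)) (min (Real.sqrt (1 + ‖η - σ‖ ^ 2))
          (min (Real.sqrt (1 + ‖σ‖ ^ 2)) (Real.sqrt (1 + ‖ξ - η‖ ^ 2)))))⁻¹
        ≤ Real.sqrt (1 + ‖ξ‖ ^ 2 - ε ^ 2 * ‖ξ‖ ^ 4)
            + Real.sqrt (1 + ‖η - σ‖ ^ 2 - ε ^ 2 * ‖η - σ‖ ^ 4)
            + Real.sqrt (1 + ‖σ‖ ^ 2 - ε ^ 2 * ‖σ‖ ^ 4)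
            - Real.sqrt (1 + ‖ξ - η‖ ^ 2 - ε ^ 2 * ‖ξ - η‖ ^ 4) := hk
      _ = Real.sqrt (1 + ‖ξ‖ ^ 2 - ε ^ 2 * ‖ξ‖ ^ 4)
            + (-1) * Real.sqrt (1 + ‖ξ - η‖ ^ 2 - ε ^ 2 * ‖ξ - η‖ ^ 4)
            + 1 * Real.sqrt (1 + ‖η - σ‖ ^ 2 - ε ^ 2 * ‖η - σ‖ ^ 4)
            + 1 * Real.sqrt (1 + ‖σ‖ ^ 2 - ε ^ 2 * ‖σ‖ ^ 4) := by ring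
      _ ≤ _ := le_abs_self _
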